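/- The infinite series 8·∑_{k=1}^{∞} k · (3/16)^k · C(2k−1, k) equals 12. -/

import Mathlib

open Finset

noncomputable def ffc : ℕ → ℝ := fun n => (catalan n : ℝ) * (3/16)^n
noncomputable def ggc : ℕ → ℝ := fun n => (n : ℝ) * ffc n
noncomputable def hhc : ℕ → ℝ := fun n => (n : ℝ)^2 * ffc n

lemma centralBinom_le_four_pow (n : ℕ) : Nat.centralBinom n ≤ 4 ^ n := by
  induction n with
  | zero => simp [Nat.centralBinom]
  | succ n ih =>
    have h := Nat.succ_mul_centralBinom_succ n
    have h2 : (n+1) * Nat.centralBinom (n+1) ≤ (n+1) * (4 * 4^n) := by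
      rw [h]
      calc 2*(2*n+1)*Nat.centralBinom n ≤ ((n+1)*4) * Nat.centralBinom n :=
            Nat.mul_le_mul_right _ (by omega)
        _ = (n+1)*(4*Nat.centralBinom n) := by ring
        _ ≤ (n+1)*(4*4^n) := Nat.mul_le_mul_left _ (Nat.mul_le_mul_left _ ih)
    rw [pow_succ, mul_comm (4^n) 4] at *
    exact Nat.le_of_mul_le_mul_left h2 (Nat.succ_pos n)

lemma catalan_le_four_pow (n : ℕ) : catalan n ≤ 4 ^ n := by
  have h1 : catalan n ≤ (n+1) * catalan n := Nat.le_mul_of_pos_left _ (Nat.succ_pos n)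
  rw [succ_mul_catalan_eq_centralBinom] at h1
  exact le_trans h1 (centralBinom_le_four_pow n)

lemma two_catalan_le (n : ℕ) : 2 * catalan n ≤ 4 ^ n + 1 := by
  cases n with
  | zero => simp
  | succ m =>
    have h1 : 2 * catalan (m+1) ≤ (m+1+1) * catalan (m+1) := Nat.mul_le_mul_right _ (by omega)
    rw [succ_mul_catalan_eq_centralBinom] at h1
    have := centralBinom_le_four_pow (m+1)
    omega

lemma ffc_nonneg (n : ℕ) : 0 ≤ ffc n := by unfold ffc; positivity

lemma summable_poly (m : ℕ) : Summable (fun n : ℕ => (n:ℝ)^m * ffc n) := by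
  refine Summable.of_nonneg_of_le (fun n => ?_) (fun n => ?_)
    (summable_pow_mul_geometric_of_norm_lt_one m (by norm_num : ‖(3/4 : ℝ)‖ < 1))
  · have := ffc_nonneg n; positivity
  ·
    have h1 : (catalan n : ℝ) ≤ 4^n := by exact_mod_cast catalan_le_four_pow n
    have h2 : ffc n ≤ (3/4)^n := by
      show (catalan n : ℝ) * (3/16)^n ≤ (3/4)^n
      calc (catalan n : ℝ) * (3/16)^n ≤ 4^n * (3/16)^n := by
            apply mul_le_mul_of_nonneg_right h1 (by positivity)
        _ = (3/4)^n := by rw [← mul_pow]; norm_num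
    have : (0:ℝ) ≤ (n:ℝ)^m := by positivity
    exact mul_le_mul_of_nonneg_left h2 this

lemma hff : Summable ffc := by simpa using summable_poly 0
lemma hgg : Summable ggc := by unfold ggc; simpa using summable_poly 1
lemma hhh : Summable hhc := summable_poly 2

lemma hffn : Summable (fun n => ‖ffc n‖) := by
  simpa only [Real.norm_eq_abs] using summable_abs_iff.mpr hff
lemma hggn : Summable (fun n => ‖ggc n‖) := by
  simpa only [Real.norm_eq_abs] using summable_abs_iff.mpr hgg
lemma hhhn : Summable (fun n => ‖hhc n‖) := by
  simpa only [Real.norm_eq_abs] using summable_abs_iff.mpr hhh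

lemma convA (n : ℕ) :
    ∑ kl ∈ antidiagonal n, ffc kl.1 * ffc kl.2 = (catalan (n+1) : ℝ) * (3/16)^n := by
  have hc : ((catalan (n+1) : ℕ) : ℝ) = ∑ kl ∈ antidiagonal n, (catalan kl.1 : ℝ) * (catalan kl.2 : ℝ) := by
    rw [catalan_succ']; push_cast; ring
  rw [hc, Finset.sum_mul]
  refine Finset.sum_congr rfl fun kl hkl => ?_
  rw [Finset.HasAntidiagonal.mem_antidiagonal] at hkl
  show ((catalan kl.1 : ℝ) * (3/16)^kl.1) * ((catalan kl.2 : ℝ) * (3/16)^kl.2) = _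
  rw [← hkl, pow_add]; ring

lemma convB (n : ℕ) :
    2 * ∑ kl ∈ antidiagonal n, ggc kl.1 * ffc kl.2
      = (n:ℝ) * ((catalan (n+1) : ℝ) * (3/16)^n) := by
  have hswap : ∑ kl ∈ antidiagonal n, ggc kl.1 * ffc kl.2
      = ∑ kl ∈ antidiagonal n, ffc kl.1 * ggc kl.2 := by
    rw [← Finset.Nat.sum_antidiagonal_swap (f := fun p : ℕ × ℕ => ffc p.1 * ggc p.2)]
    exact Finset.sum_congr rfl fun kl _ => by simp [Prod.swap, mul_comm]
  rw [two_mul]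
  nth_rewrite 2 [hswap]
  rw [← Finset.sum_add_distrib, ← convA n, Finset.mul_sum]
  refine Finset.sum_congr rfl fun kl hkl => ?_
  rw [Finset.HasAntidiagonal.mem_antidiagonal] at hkl
  have : ((kl.1 : ℝ) + kl.2) = (n : ℝ) := by exact_mod_cast congrArg (Nat.cast (R := ℝ)) hkl
  show (kl.1:ℝ) * ffc kl.1 * ffc kl.2 + ffc kl.1 * ((kl.2:ℝ) * ffc kl.2) = _
  rw [← this]; ring

lemma convC (n : ℕ) :
    2 * (∑ kl ∈ antidiagonal n, hhc kl.1 * ffc kl.2)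
      + 2 * (∑ kl ∈ antidiagonal n, ggc kl.1 * ggc kl.2)
      = (n:ℝ)^2 * ((catalan (n+1) : ℝ) * (3/16)^n) := by
  have hswap : ∑ kl ∈ antidiagonal n, hhc kl.1 * ffc kl.2
      = ∑ kl ∈ antidiagonal n, ffc kl.1 * hhc kl.2 := by
    rw [← Finset.Nat.sum_antidiagonal_swap (f := fun p : ℕ × ℕ => ffc p.1 * hhc p.2)]
    exact Finset.sum_congr rfl fun kl _ => by simp [Prod.swap, mul_comm]
  rw [two_mul (∑ kl ∈ antidiagonal n, hhc kl.1 * ffc kl.2)]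
  nth_rewrite 2 [hswap]
  rw [two_mul (∑ kl ∈ antidiagonal n, ggc kl.1 * ggc kl.2),
    ← Finset.sum_add_distrib, ← Finset.sum_add_distrib, ← Finset.sum_add_distrib,
    ← convA n, Finset.mul_sum]
  refine Finset.sum_congr rfl fun kl hkl => ?_
  rw [Finset.HasAntidiagonal.mem_antidiagonal] at hkl
  have : ((kl.1 : ℝ) + kl.2) = (n : ℝ) := by exact_mod_cast congrArg (Nat.cast (R := ℝ)) hkl
  show (kl.1:ℝ)^2 * ffc kl.1 * ffc kl.2 + ffc kl.1 * ((kl.2:ℝ)^2 * ffc kl.2)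
      + ((kl.1:ℝ) * ffc kl.1 * ((kl.2:ℝ) * ffc kl.2) + (kl.1:ℝ) * ffc kl.1 * ((kl.2:ℝ) * ffc kl.2)) = _
  rw [← this]; ring

lemma hff1 : Summable (fun n => ffc (n+1)) := (summable_nat_add_iff 1).2 hff
lemma hgg1 : Summable (fun n => ggc (n+1)) := (summable_nat_add_iff 1).2 hgg
lemma hhh1 : Summable (fun n => hhc (n+1)) := (summable_nat_add_iff 1).2 hhh

lemma ffc_zero : ffc 0 = 1 := by simp [ffc]
lemma ggc_zero : ggc 0 = 0 := by simp [ggc]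
lemma hhc_zero : hhc 0 = 0 := by simp [hhc]

lemma tsum_ffc_shift : ∑' n : ℕ, ffc (n+1) = (∑' n, ffc n) - 1 := by
  have h := Summable.tsum_eq_zero_add hff
  rw [ffc_zero] at h; linarith
lemma tsum_ggc_shift : ∑' n : ℕ, ggc (n+1) = ∑' n, ggc n := by
  have h := Summable.tsum_eq_zero_add hgg
  rw [ggc_zero] at h; linarith
lemma tsum_hhc_shift : ∑' n : ℕ, hhc (n+1) = ∑' n, hhc n := by
  have h := Summable.tsum_eq_zero_add hhh
  rw [hhc_zero] at h; linarith


lemma G_eq : ∑' n, ffc n = 4/3 := by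
  have e1 : (∑' n, ffc n) * (∑' n, ffc n) = (16/3) * ((∑' n, ffc n) - 1) := by
    rw [tsum_mul_tsum_eq_tsum_sum_antidiagonal_of_summable_norm hffn hffn]
    rw [tsum_congr convA]
    have key : ∀ n : ℕ, (catalan (n+1) : ℝ) * (3/16)^n = (16/3) * ffc (n+1) := by
      intro n
      have : ffc (n+1) = (catalan (n+1) : ℝ) * (3/16)^(n+1) := rfl
      rw [this, pow_succ]; ring
    rw [tsum_congr key, tsum_mul_left, tsum_ffc_shift]
  have hbnd : (∑' n, ffc n) ≤ 34/13 := by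
    have hs1 : Summable (fun n : ℕ => ((3:ℝ)/4)^n) :=
      summable_geometric_of_lt_one (by norm_num) (by norm_num)
    have hs2 : Summable (fun n : ℕ => ((3:ℝ)/16)^n) :=
      summable_geometric_of_lt_one (by norm_num) (by norm_num)
    have hle : ∀ n, ffc n ≤ (1/2) * (((3:ℝ)/4)^n + ((3:ℝ)/16)^n) := by
      intro n
      have h1 : (2 * catalan n : ℝ) ≤ 4^n + 1 := by exact_mod_cast two_catalan_le n
      have h2 : (2 * catalan n : ℝ) * (3/16)^n ≤ (4^n + 1) * (3/16)^n :=
        mul_le_mul_of_nonneg_right h1 (by positivity)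
      have h3 : ((4:ℝ)^n + 1) * (3/16)^n = (3/4)^n + (3/16)^n := by
        rw [add_mul, ← mul_pow]; norm_num
      show (catalan n : ℝ) * (3/16)^n ≤ _
      nlinarith [h2, h3]
    calc (∑' n, ffc n) ≤ ∑' n, (1/2) * (((3:ℝ)/4)^n + ((3:ℝ)/16)^n) := by
          exact Summable.tsum_le_tsum hle hff ((hs1.add hs2).mul_left _)
      _ = (1/2) * ((∑' n : ℕ, ((3:ℝ)/4)^n) + (∑' n : ℕ, ((3:ℝ)/16)^n)) := by
          rw [tsum_mul_left, Summable.tsum_add hs1 hs2]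
      _ = 34/13 := by
          rw [tsum_geometric_of_lt_one (by norm_num) (by norm_num),
            tsum_geometric_of_lt_one (by norm_num) (by norm_num)]
          norm_num
  have hfac : (3*(∑' n, ffc n) - 4) * ((∑' n, ffc n) - 4) = 0 := by nlinarith [e1]
  rcases mul_eq_zero.1 hfac with h | h
  · linarith
  · linarith

lemma D_eq : ∑' n, ggc n = 2/3 := by
  have e2 : 2 * ((∑' n, ggc n) * (∑' n, ffc n))
      = (16/3) * ((∑' n, ggc n) - (∑' n, ffc n) + 1) := by
    rw [tsum_mul_tsum_eq_tsum_sum_antidiagonal_of_summable_norm hggn hffn, ← tsum_mul_left]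
    rw [tsum_congr convB]
    have key : ∀ n : ℕ, (n:ℝ) * ((catalan (n+1) : ℝ) * (3/16)^n)
        = (16/3) * (ggc (n+1) - ffc (n+1)) := by
      intro n
      have h1 : ggc (n+1) = ((n:ℝ)+1) * ((catalan (n+1) : ℝ) * (3/16)^(n+1)) := by
        show ((n+1 : ℕ) : ℝ) * _ = _
        push_cast; rfl
      have h2 : ffc (n+1) = (catalan (n+1) : ℝ) * (3/16)^(n+1) := rfl
      rw [h1, h2, pow_succ]; ring
    rw [tsum_congr key, tsum_mul_left, Summable.tsum_sub hgg1 hff1, tsum_ggc_shift, tsum_ffc_shift]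
    ring
  rw [G_eq] at e2
  linarith

lemma E_eq : ∑' n, hhc n = 7/3 := by
  have hconv1 : Summable (fun n => ∑ kl ∈ antidiagonal n, hhc kl.1 * ffc kl.2) :=
    summable_sum_mul_antidiagonal_of_summable_mul (summable_mul_of_summable_norm hhhn hffn)
  have hconv2 : Summable (fun n => ∑ kl ∈ antidiagonal n, ggc kl.1 * ggc kl.2) :=
    summable_sum_mul_antidiagonal_of_summable_mul (summable_mul_of_summable_norm hggn hggn)
  have e3 : 2 * ((∑' n, hhc n) * (∑' n, ffc n)) + 2 * ((∑' n, ggc n) * (∑' n, ggc n))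
      = (16/3) * ((∑' n, hhc n) - 2 * (∑' n, ggc n) + (∑' n, ffc n) - 1) := by
    rw [tsum_mul_tsum_eq_tsum_sum_antidiagonal_of_summable_norm hhhn hffn,
      tsum_mul_tsum_eq_tsum_sum_antidiagonal_of_summable_norm hggn hggn,
      ← tsum_mul_left, ← tsum_mul_left,
      ← Summable.tsum_add (hconv1.mul_left 2) (hconv2.mul_left 2)]
    rw [tsum_congr convC]
    have key : ∀ n : ℕ, (n:ℝ)^2 * ((catalan (n+1) : ℝ) * (3/16)^n)
        = (16/3) * (hhc (n+1) - 2 * ggc (n+1) + ffc (n+1)) := by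
      intro n
      have h0 : ffc (n+1) = (catalan (n+1) : ℝ) * (3/16)^(n+1) := rfl
      have h1 : ggc (n+1) = ((n:ℝ)+1) * ((catalan (n+1) : ℝ) * (3/16)^(n+1)) := by
        show ((n+1 : ℕ) : ℝ) * _ = _
        push_cast; rfl
      have h2 : hhc (n+1) = ((n:ℝ)+1)^2 * ((catalan (n+1) : ℝ) * (3/16)^(n+1)) := by
        show (((n+1 : ℕ)) : ℝ)^2 * _ = _
        push_cast; rfl
      rw [h0, h1, h2, pow_succ]; ring
    rw [tsum_congr key, tsum_mul_left,
      Summable.tsum_add (hhh1.sub (hgg1.mul_left 2)) hff1,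
      Summable.tsum_sub hhh1 (hgg1.mul_left 2), tsum_mul_left,
      tsum_ffc_shift, tsum_ggc_shift, tsum_hhc_shift]
    ring
  rw [G_eq, D_eq] at e3
  linarith

lemma two_choose (m : ℕ) : 2 * ((2*(m+1) - 1).choose (m+1)) = (2*(m+1)).choose (m+1) := by
  have h1 : 2*(m+1) - 1 = 2*m+1 := by omega
  have h2 : 2*(m+1) = (2*m+1) + 1 := by omega
  rw [h1, h2]
  conv_rhs => rw [Nat.choose_succ_succ]
  simp only [Nat.succ_eq_add_one]
  have h3 : (2*m+1).choose (m+1) = (2*m+1).choose m := by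
    have h4 : 2*m+1 - m = m+1 := by omega
    rw [← h4, Nat.choose_symm (by omega)]
  omega

lemma term_eq (k : ℕ) :
    (k : ℝ) * (3 / 16) ^ k * ((2 * k - 1).choose k : ℝ) = (1/2) * (hhc k + ggc k) := by
  cases k with
  | zero => simp [hhc, ggc]
  | succ m =>
    have hc : ((2*(m+1) - 1).choose (m+1) : ℝ) = ((2*(m+1)).choose (m+1) : ℝ) / 2 := by
      have h := two_choose m
      rw [eq_div_iff (by norm_num : (2:ℝ) ≠ 0)]
      have h' : ((2*(m+1) - 1).choose (m+1)) * 2 = (2*(m+1)).choose (m+1) := by omega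
      exact_mod_cast h'
    have hcat : ((2*(m+1)).choose (m+1) : ℝ) = ((m+1 : ℕ) + 1 : ℝ) * (catalan (m+1) : ℝ) := by
      have := succ_mul_catalan_eq_centralBinom (m+1)
      have h2 : Nat.centralBinom (m+1) = (2*(m+1)).choose (m+1) := rfl
      rw [← h2, ← this]; push_cast; ring
    rw [hc, hcat]
    show _ = (1/2) * (((m+1:ℕ):ℝ)^2 * (((catalan (m+1):ℝ)) * (3/16)^(m+1))
      + ((m+1:ℕ):ℝ) * (((catalan (m+1):ℝ)) * (3/16)^(m+1)))
    push_cast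
    ring

/-- `8·∑_{k≥1} k·(3/16)^k·C(2k−1, k) = 12`. -/
theorem series_eq_twelve :
    8 * ∑' k : ℕ, (k : ℝ) * (3 / 16) ^ k * ((2 * k - 1).choose k : ℝ) = 12 := by
  rw [tsum_congr term_eq, tsum_mul_left, Summable.tsum_add hhh hgg, E_eq, D_eq]
  norm_num
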